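/- There exists a constant c > 0 such that for every continuous f : [−1,1] → ℝ and every n ≥ 1, the Shepard operator with exponent p = 4 satisfies max_{|x|≤1} |f(x) − R_n(f,x)| ≤ c·ω(f, 1/n). -/

import Mathlib

open Real Classical

/-- The Shepard operator with exponent `p = 4` on `[-1,1]`, based on the
equidistant nodes `k/n`, `|k| ≤ n`, extended by the node values of `f`. -/
noncomputable def shepard4 (n : ℕ) (f : ℝ → ℝ) (x : ℝ) : ℝ :=
  if ∃ j : ℤ, |j| ≤ (n : ℤ) ∧ x = (j : ℝ) / n then f x
  else (∑ k ∈ Finset.Icc (-(n : ℤ)) (n : ℤ), f ((k : ℝ) / n) * ((x - (k : ℝ) / n) ^ 4)⁻¹) /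
    (∑ k ∈ Finset.Icc (-(n : ℤ)) (n : ℤ), ((x - (k : ℝ) / n) ^ 4)⁻¹)

/-- Modulus of continuity of `f` on `[-1,1]`. -/
noncomputable def omegaIcc (f : ℝ → ℝ) (δ : ℝ) : ℝ :=
  sSup {d : ℝ | ∃ x ∈ Set.Icc (-1 : ℝ) 1, ∃ y ∈ Set.Icc (-1 : ℝ) 1,
    |x - y| ≤ δ ∧ d = |f x - f y|}

lemma omega_bdd {f : ℝ → ℝ} (hf : ContinuousOn f (Set.Icc (-1 : ℝ) 1)) (δ : ℝ) :
    BddAbove {d : ℝ | ∃ x ∈ Set.Icc (-1 : ℝ) 1, ∃ y ∈ Set.Icc (-1 : ℝ) 1,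
      |x - y| ≤ δ ∧ d = |f x - f y|} := by
  obtain ⟨C, hC⟩ := (isCompact_Icc (a := (-1:ℝ)) (b := 1)).exists_bound_of_continuousOn hf
  refine ⟨2 * C, ?_⟩
  rintro d ⟨x, hx, y, hy, -, rfl⟩
  have h1 := hC x hx
  have h2 := hC y hy
  simp only [Real.norm_eq_abs] at h1 h2
  calc |f x - f y| ≤ |f x| + |f y| := abs_sub _ _
    _ ≤ 2 * C := by linarith

lemma omega_le {f : ℝ → ℝ} (hf : ContinuousOn f (Set.Icc (-1 : ℝ) 1)) {δ x y : ℝ}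
    (hx : x ∈ Set.Icc (-1 : ℝ) 1) (hy : y ∈ Set.Icc (-1 : ℝ) 1) (h : |x - y| ≤ δ) :
    |f x - f y| ≤ omegaIcc f δ :=
  le_csSup (omega_bdd hf δ) ⟨x, hx, y, hy, h, rfl⟩

lemma omega_nonneg {f : ℝ → ℝ} (hf : ContinuousOn f (Set.Icc (-1 : ℝ) 1)) {δ : ℝ}
    (hδ : 0 ≤ δ) : 0 ≤ omegaIcc f δ := by
  have := omega_le hf (Set.mem_Icc.2 ⟨by norm_num, le_refl 1⟩)
    (Set.mem_Icc.2 ⟨by norm_num, le_refl 1⟩) (by simpa using hδ)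
  simpa using this

lemma sum_inv_cube_le (M : ℕ) : ∑ m ∈ Finset.Icc 1 M, (((m:ℝ))^3)⁻¹ ≤ 2 := by
  have key : ∀ M : ℕ, 1 ≤ M → ∑ m ∈ Finset.Icc 1 M, (((m:ℝ))^3)⁻¹ ≤ 2 - (M:ℝ)⁻¹ := by
    intro M hM
    induction M with
    | zero => omega
    | succ K ih =>
      rcases Nat.eq_or_lt_of_le hM with h1 | h1
      · simp [← h1]; norm_num
      · have hK : 1 ≤ K := by omega
        have hK0 : (0:ℝ) < K := by exact_mod_cast hK
        rw [Finset.sum_Icc_succ_top (by omega)]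
        have step : (((K:ℝ)+1)^3)⁻¹ ≤ (K:ℝ)⁻¹ - ((K:ℝ)+1)⁻¹ := by
          have h2 : (K:ℝ)⁻¹ - ((K:ℝ)+1)⁻¹ = ((K:ℝ)*((K:ℝ)+1))⁻¹ := by
            field_simp
            ring
          rw [h2]
          apply inv_anti₀ (by positivity)
          nlinarith [hK0, sq_nonneg ((K:ℝ)+1), sq_nonneg ((K:ℝ))]
        have := ih hK
        push_cast
        linarith
  rcases Nat.eq_zero_or_pos M with h | h
  · simp [h]
  · have := key M h
    have : (0:ℝ) < (M:ℝ)⁻¹ := by positivity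
    linarith [key M h]

lemma omega_chain {f : ℝ → ℝ} (hf : ContinuousOn f (Set.Icc (-1 : ℝ) 1)) {n : ℕ}
    (hn : 1 ≤ n) {x y : ℝ} (hx : x ∈ Set.Icc (-1 : ℝ) 1) (hy : y ∈ Set.Icc (-1 : ℝ) 1) :
    |f x - f y| ≤ (1 + n * |x - y|) * omegaIcc f (1 / n) := by
  have hN : (0:ℝ) < n := by exact_mod_cast hn
  have hδ : (0:ℝ) ≤ 1 / n := by positivity
  have hω := omega_nonneg hf hδ
  rcases eq_or_ne x y with rfl | hxy
  · simpa using hω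
  · set m : ℕ := ⌈(n:ℝ) * |x - y|⌉₊ with hm
    have hxy' : 0 < |x - y| := abs_pos.2 (sub_ne_zero.2 hxy)
    have hm1 : 1 ≤ m := Nat.one_le_ceil_iff.2 (by positivity)
    have hmR : (0:ℝ) < m := by exact_mod_cast hm1
    set p : ℕ → ℝ := fun j => y + j * (x - y) / m with hp
    have hp0 : p 0 = y := by simp [hp]
    have hpm : p m = x := by
      simp only [hp]
      field_simp
      ring
    have hmem : ∀ j : ℕ, j ≤ m → p j ∈ Set.Icc (-1 : ℝ) 1 := by
      intro j hj
      have ht0 : (0:ℝ) ≤ (j:ℝ) / m := by positivity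
      have ht1 : (j:ℝ) / m ≤ 1 := by
        rw [div_le_one hmR]; exact_mod_cast hj
      have hpj : p j = (1 - (j:ℝ)/m) * y + ((j:ℝ)/m) * x := by
        simp only [hp]; ring
      rw [hpj]
      obtain ⟨hx1, hx2⟩ := hx
      obtain ⟨hy1, hy2⟩ := hy
      constructor <;> nlinarith
    have hstep : ∀ j : ℕ, j < m → |f (p (j+1)) - f (p j)| ≤ omegaIcc f (1 / n) := by
      intro j hj
      apply omega_le hf (hmem _ (by omega)) (hmem _ (le_of_lt hj))
      have : p (j+1) - p j = (x - y) / m := by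
        simp only [hp]; push_cast; ring
      rw [this, abs_div, abs_of_pos hmR, div_le_div_iff₀ hmR hN]
      have := Nat.le_ceil ((n:ℝ) * |x - y|)
      rw [← hm] at this
      linarith
    have htel : f x - f y = ∑ j ∈ Finset.range m, (f (p (j+1)) - f (p j)) := by
      rw [Finset.sum_range_sub (fun j => f (p j)), hp0, hpm]
    calc |f x - f y| ≤ ∑ j ∈ Finset.range m, |f (p (j+1)) - f (p j)| := by
          rw [htel]; exact Finset.abs_sum_le_sum_abs _ _
      _ ≤ ∑ _j ∈ Finset.range m, omegaIcc f (1 / n) := by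
          apply Finset.sum_le_sum
          intro j hj
          exact hstep j (Finset.mem_range.1 hj)
      _ = m * omegaIcc f (1 / n) := by
          rw [Finset.sum_const, Finset.card_range, nsmul_eq_mul]
      _ ≤ (1 + n * |x - y|) * omegaIcc f (1 / n) := by
          apply mul_le_mul_of_nonneg_right _ hω
          have := Nat.ceil_lt_add_one (a := (n:ℝ) * |x - y|) (by positivity)
          rw [← hm] at this
          linarith

lemma inv_pow_helper (a : ℝ) (ha : a ≠ 0) : a * (a^4)⁻¹ = (a^3)⁻¹ := by
  field_simp

/-- There is a constant `c > 0` such that for every continuous `f` on `[-1,1]`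
and every `n ≥ 1` the Shepard operator with exponent `4` satisfies
`max_{|x|≤1} |f(x) - R_n(f,x)| ≤ c ω(f, 1/n)` (Jackson order). -/
theorem shepard4_jackson :
    ∃ c : ℝ, 0 < c ∧ ∀ f : ℝ → ℝ, ContinuousOn f (Set.Icc (-1 : ℝ) 1) →
      ∀ n : ℕ, 1 ≤ n → ∀ x ∈ Set.Icc (-1 : ℝ) 1,
        |f x - shepard4 n f x| ≤ c * omegaIcc f (1 / n) := by
  refine ⟨4, by norm_num, ?_⟩
  intro f hf n hn x hx
  have hN : (0:ℝ) < n := by exact_mod_cast hn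
  have hδ : (0:ℝ) ≤ 1 / n := by positivity
  have hω := omega_nonneg hf hδ
  by_cases hnode : ∃ j : ℤ, |j| ≤ (n : ℤ) ∧ x = (j : ℝ) / n
  · rw [shepard4, if_pos hnode]
    simp only [sub_self, abs_zero]
    linarith
  · rw [shepard4, if_neg hnode]
    push_neg at hnode
    set D := Finset.Icc (-(n : ℤ)) (n : ℤ) with hDdef
    have hne : ∀ k ∈ D, x - (k : ℝ) / n ≠ 0 := by
      intro k hk
      rw [hDdef, Finset.mem_Icc] at hk
      exact sub_ne_zero.2 (hnode k (abs_le.2 hk))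
    have hwpos : ∀ k ∈ D, 0 < ((x - (k : ℝ) / n) ^ 4)⁻¹ := by
      intro k hk
      have := hne k hk
      positivity
    set S4 := ∑ k ∈ D, ((x - (k : ℝ) / n) ^ 4)⁻¹ with hS4def
    set j0 : ℤ := round ((n : ℝ) * x) with hj0def
    have habs : |(n : ℝ) * x - j0| ≤ 1 / 2 := abs_sub_round _
    have hj0D : j0 ∈ D := by
      rw [hDdef, Finset.mem_Icc]
      obtain ⟨hr1, hr2⟩ := abs_le.1 habs
      obtain ⟨hx1, hx2⟩ := hx
      have h1 : ((-(n:ℤ) - 1 : ℤ) : ℝ) < (j0 : ℝ) := by push_cast; nlinarith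
      have h2 : (j0 : ℝ) < (((n:ℤ) + 1 : ℤ) : ℝ) := by push_cast; nlinarith
      have h1' : -(n:ℤ) - 1 < j0 := by exact_mod_cast h1
      have h2' : j0 < (n:ℤ) + 1 := by exact_mod_cast h2
      omega
    set d0 := |x - (j0 : ℝ) / n| with hd0def
    have hd0pos : 0 < d0 := abs_pos.2 (hne j0 hj0D)
    have hd0le : d0 ≤ 1 / (2 * n) := by
      have heq : x - (j0 : ℝ) / n = ((n : ℝ) * x - j0) / n := by field_simp
      rw [hd0def, heq, abs_div, abs_of_pos hN]
      rw [div_le_div_iff₀ hN (by positivity)]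
      nlinarith
    have hnd0 : (n : ℝ) * d0 ≤ 1 / 2 := by
      have := mul_le_mul_of_nonneg_left hd0le hN.le
      calc (n:ℝ) * d0 ≤ (n:ℝ) * (1/(2*n)) := this
        _ = 1/2 := by field_simp
    -- even power rewrite at j0
    have hpow : (x - (j0 : ℝ) / n) ^ 4 = d0 ^ 4 := by
      rw [hd0def, ← abs_pow, abs_of_nonneg (by positivity)]
    have hterm0 : (d0 ^ 4)⁻¹ ≤ S4 := by
      rw [← hpow]
      exact Finset.single_le_sum (fun k hk => (hwpos k hk).le) hj0D
    have h16 : 16 * (n : ℝ) ^ 4 ≤ (d0 ^ 4)⁻¹ := by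
      have hd4 : d0 ^ 4 ≤ (1 / (2 * n)) ^ 4 := pow_le_pow_left₀ hd0pos.le hd0le 4
      have : ((1 / (2 * (n:ℝ))) ^ 4)⁻¹ = 16 * (n:ℝ) ^ 4 := by
        field_simp; ring
      rw [← this]
      exact inv_anti₀ (by positivity) hd4
    have hS4pos : 0 < S4 := Finset.sum_pos hwpos ⟨j0, hj0D⟩
    -- the cube sum bound
    set S3 := ∑ k ∈ D, (|x - (k : ℝ) / n| ^ 3)⁻¹ with hS3def
    have hrest : ∑ k ∈ D.erase j0, (|x - (k : ℝ) / n| ^ 3)⁻¹ ≤ 32 * (n : ℝ) ^ 3 := by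
      have hper : ∀ k ∈ D.erase j0,
          (|x - (k : ℝ) / n| ^ 3)⁻¹ ≤ 8 * (n:ℝ)^3 * ((((k - j0).natAbs : ℝ)) ^ 3)⁻¹ := by
        intro k hk
        obtain ⟨hkne, hkD⟩ := Finset.mem_erase.1 hk
        have hkj : k - j0 ≠ 0 := sub_ne_zero.2 hkne
        have ha1' : (1:ℝ) ≤ ((k - j0).natAbs : ℝ) := by
          have : 1 ≤ (k - j0).natAbs := by omega
          exact_mod_cast this
        set a : ℝ := ((k - j0).natAbs : ℝ) with ha
        have ha1 : (1:ℝ) ≤ a := ha1'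
        have haeq : a = |(k:ℝ) - (j0:ℝ)| := by
          rw [ha, Nat.cast_natAbs]
          push_cast
          ring_nf
        have hdist : a / (2 * n) ≤ |x - (k : ℝ) / n| := by
          have heq : x - (k : ℝ) / n = ((n : ℝ) * x - k) / n := by field_simp
          rw [heq, abs_div, abs_of_pos hN, div_le_div_iff₀ (by positivity) hN]
          have htri : |(k:ℝ) - (j0:ℝ)| - |(n:ℝ) * x - j0| ≤ |(n:ℝ)*x - k| := by
            have := abs_sub_abs_le_abs_sub ((k:ℝ) - (j0:ℝ)) (((n:ℝ)*x - j0))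
            calc |(k:ℝ) - (j0:ℝ)| - |(n:ℝ) * x - j0|
                ≤ |((k:ℝ) - (j0:ℝ)) - ((n:ℝ)*x - j0)| := abs_sub_abs_le_abs_sub _ _
              _ = |(n:ℝ)*x - k| := by rw [← abs_neg]; ring_nf
          rw [← haeq] at htri
          nlinarith
        have h3 : (a / (2*n))^3 ≤ |x - (k : ℝ) / n| ^ 3 :=
          pow_le_pow_left₀ (by positivity) hdist 3
        calc (|x - (k : ℝ) / n| ^ 3)⁻¹ ≤ ((a / (2*n))^3)⁻¹ :=
              inv_anti₀ (by positivity) h3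
          _ = 8 * (n:ℝ)^3 * (a ^ 3)⁻¹ := by
              field_simp; ring
      calc ∑ k ∈ D.erase j0, (|x - (k : ℝ) / n| ^ 3)⁻¹
          ≤ ∑ k ∈ D.erase j0, 8 * (n:ℝ)^3 * ((((k - j0).natAbs : ℝ)) ^ 3)⁻¹ :=
            Finset.sum_le_sum hper
        _ = 8 * (n:ℝ)^3 * ∑ k ∈ D.erase j0, ((((k - j0).natAbs : ℝ)) ^ 3)⁻¹ := by
            rw [Finset.mul_sum]
        _ ≤ 8 * (n:ℝ)^3 * 4 := by
            apply mul_le_mul_of_nonneg_left _ (by positivity)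
            -- split into k > j0 and k < j0
            have hsplit : D.erase j0 = (D.erase j0).filter (fun k => j0 < k) ∪
                (D.erase j0).filter (fun k => k < j0) := by
              ext k
              simp only [Finset.mem_union, Finset.mem_filter, Finset.mem_erase]
              constructor
              · rintro ⟨h1, h2⟩
                rcases lt_or_gt_of_ne h1 with h | h
                · exact Or.inr ⟨⟨h1, h2⟩, h⟩
                · exact Or.inl ⟨⟨h1, h2⟩, h⟩
              · rintro (⟨h, _⟩ | ⟨h, _⟩) <;> exact h
            have hbound : ∀ s : Finset ℤ, s ⊆ D.erase j0 →
                (∀ k₁ ∈ s, ∀ k₂ ∈ s, (k₁ - j0).natAbs = (k₂ - j0).natAbs → k₁ = k₂) →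
                ∑ k ∈ s, ((((k - j0).natAbs : ℝ)) ^ 3)⁻¹ ≤ 2 := by
              intro s hs hinj
              rw [← Finset.sum_image (g := fun k => (k - j0).natAbs) (f := fun m : ℕ => (((m:ℝ))^3)⁻¹) hinj]
              have hsub : s.image (fun k => (k - j0).natAbs) ⊆ Finset.Icc 1 (2*n) := by
                intro m hm
                rw [Finset.mem_image] at hm
                obtain ⟨k, hk, rfl⟩ := hm
                have hk' := hs hk
                obtain ⟨hkne, hkD⟩ := Finset.mem_erase.1 hk'
                rw [hDdef, Finset.mem_Icc] at hkD
                have hj0D' := hj0D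
                rw [hDdef, Finset.mem_Icc] at hj0D'
                rw [Finset.mem_Icc]
                omega
              calc ∑ m ∈ s.image (fun k => (k - j0).natAbs), (((m:ℝ)) ^ 3)⁻¹
                  ≤ ∑ m ∈ Finset.Icc 1 (2*n), (((m:ℝ)) ^ 3)⁻¹ :=
                    Finset.sum_le_sum_of_subset_of_nonneg hsub
                      (fun m _ _ => by positivity)
                _ ≤ 2 := sum_inv_cube_le (2*n)
            have hdisj : Disjoint ((D.erase j0).filter (fun k => j0 < k))
                ((D.erase j0).filter (fun k => k < j0)) := by
              rw [Finset.disjoint_filter]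
              intro k _ h
              omega
            rw [hsplit, Finset.sum_union hdisj]
            have b1 := hbound ((D.erase j0).filter (fun k => j0 < k))
              (Finset.filter_subset _ _) (by
                intro k₁ hk₁ k₂ hk₂ h
                rw [Finset.mem_filter] at hk₁ hk₂
                omega)
            have b2 := hbound ((D.erase j0).filter (fun k => k < j0))
              (Finset.filter_subset _ _) (by
                intro k₁ hk₁ k₂ hk₂ h
                rw [Finset.mem_filter] at hk₁ hk₂
                omega)
            linarith
        _ = 32 * (n:ℝ)^3 := by ring
    have hS3 : S3 ≤ (d0 ^ 3)⁻¹ + 32 * (n : ℝ) ^ 3 := by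
      rw [hS3def, ← Finset.add_sum_erase _ _ hj0D, ← hd0def]
      linarith [hrest]
    -- S3 relates to weighted distances
    have hS3eq : ∀ k ∈ D, |x - (k:ℝ)/n| * ((x - (k : ℝ) / n) ^ 4)⁻¹
        = (|x - (k : ℝ) / n| ^ 3)⁻¹ := by
      intro k hk
      have h := hne k hk
      have habs0 : |x - (k:ℝ)/n| ≠ 0 := abs_ne_zero.2 h
      rw [show (x - (k:ℝ)/n)^4 = |x - (k:ℝ)/n|^4 by
        rw [← abs_pow, abs_of_nonneg (by positivity)]]
      exact inv_pow_helper _ habs0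
    -- main numerator bound
    have hmain : ∑ k ∈ D, |f x - f ((k:ℝ)/n)| * ((x - (k : ℝ) / n) ^ 4)⁻¹
        ≤ 4 * omegaIcc f (1/n) * S4 := by
      have hper : ∀ k ∈ D, |f x - f ((k:ℝ)/n)| * ((x - (k : ℝ) / n) ^ 4)⁻¹
          ≤ (1 + n * |x - (k:ℝ)/n|) * omegaIcc f (1/n) * ((x - (k : ℝ) / n) ^ 4)⁻¹ := by
        intro k hk
        apply mul_le_mul_of_nonneg_right _ (hwpos k hk).le
        apply omega_chain hf hn hx
        rw [hDdef, Finset.mem_Icc] at hk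
        have hk1 : -(n:ℝ) ≤ (k:ℝ) := by exact_mod_cast hk.1
        have hk2 : (k:ℝ) ≤ (n:ℝ) := by exact_mod_cast hk.2
        constructor
        · rw [le_div_iff₀ hN]; linarith
        · rw [div_le_one hN]; linarith
      have hsum : ∑ k ∈ D, (1 + n * |x - (k:ℝ)/n|) * omegaIcc f (1/n)
            * ((x - (k : ℝ) / n) ^ 4)⁻¹
          = omegaIcc f (1/n) * S4 + (omegaIcc f (1/n) * n) * S3 := by
        have hterm : ∀ k ∈ D, (1 + n * |x - (k:ℝ)/n|) * omegaIcc f (1/n)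
            * ((x - (k : ℝ) / n) ^ 4)⁻¹
            = omegaIcc f (1/n) * ((x - (k : ℝ) / n) ^ 4)⁻¹
              + (omegaIcc f (1/n) * n) * (|x - (k : ℝ) / n| ^ 3)⁻¹ := by
          intro k hk
          rw [← hS3eq k hk]
          ring
        rw [Finset.sum_congr rfl hterm, Finset.sum_add_distrib, ← Finset.mul_sum,
          ← Finset.mul_sum, hS4def, hS3def]
      have key : (n:ℝ) * S3 ≤ 3 * S4 := by
        have hinv : (d0^3)⁻¹ = d0 * (d0^4)⁻¹ := (inv_pow_helper d0 hd0pos.ne').symm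
        have e1 : (n:ℝ) * (d0^3)⁻¹ ≤ (1/2) * (d0^4)⁻¹ := by
          rw [hinv]
          calc (n:ℝ) * (d0 * (d0^4)⁻¹) = ((n:ℝ) * d0) * (d0^4)⁻¹ := by ring
            _ ≤ (1/2) * (d0^4)⁻¹ := mul_le_mul_of_nonneg_right hnd0 (by positivity)
        calc (n:ℝ) * S3 ≤ (n:ℝ) * ((d0 ^ 3)⁻¹ + 32 * (n : ℝ) ^ 3) :=
              mul_le_mul_of_nonneg_left hS3 hN.le
          _ = (n:ℝ) * (d0^3)⁻¹ + 2 * (16 * (n:ℝ)^4) := by ring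
          _ ≤ (1/2) * (d0^4)⁻¹ + 2 * (d0^4)⁻¹ := by linarith
          _ ≤ (1/2) * S4 + 2 * S4 := by linarith
          _ ≤ 3 * S4 := by linarith
      calc ∑ k ∈ D, |f x - f ((k:ℝ)/n)| * ((x - (k : ℝ) / n) ^ 4)⁻¹
          ≤ ∑ k ∈ D, (1 + n * |x - (k:ℝ)/n|) * omegaIcc f (1/n)
              * ((x - (k : ℝ) / n) ^ 4)⁻¹ := Finset.sum_le_sum hper
        _ = omegaIcc f (1/n) * S4 + (omegaIcc f (1/n) * n) * S3 := hsum
        _ ≤ omegaIcc f (1/n) * S4 + omegaIcc f (1/n) * (3 * S4) := by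
            have h2 : (omegaIcc f (1/n) * n) * S3 ≤ omegaIcc f (1/n) * (3 * S4) := by
              calc (omegaIcc f (1/n) * n) * S3 = omegaIcc f (1/n) * ((n:ℝ) * S3) := by
                    ring
                _ ≤ omegaIcc f (1/n) * (3 * S4) := mul_le_mul_of_nonneg_left key hω
            linarith
        _ = 4 * omegaIcc f (1/n) * S4 := by ring
    -- conclude
    have hdiff : f x - (∑ k ∈ D, f ((k : ℝ) / n) * ((x - (k : ℝ) / n) ^ 4)⁻¹) / S4
        = (∑ k ∈ D, (f x - f ((k : ℝ) / n)) * ((x - (k : ℝ) / n) ^ 4)⁻¹) / S4 := by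
      rw [eq_div_iff hS4pos.ne', sub_mul, div_mul_cancel₀ _ hS4pos.ne']
      rw [hS4def, Finset.mul_sum, ← Finset.sum_sub_distrib]
      apply Finset.sum_congr rfl
      intro k _
      ring
    rw [hdiff, abs_div, abs_of_pos hS4pos, div_le_iff₀ hS4pos]
    calc |∑ k ∈ D, (f x - f ((k : ℝ) / n)) * ((x - (k : ℝ) / n) ^ 4)⁻¹|
        ≤ ∑ k ∈ D, |(f x - f ((k : ℝ) / n)) * ((x - (k : ℝ) / n) ^ 4)⁻¹| :=
          Finset.abs_sum_le_sum_abs _ _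
      _ = ∑ k ∈ D, |f x - f ((k : ℝ) / n)| * ((x - (k : ℝ) / n) ^ 4)⁻¹ :=
          Finset.sum_congr rfl (fun k hk => by
            rw [abs_mul, abs_of_pos (hwpos k hk)])
      _ ≤ 4 * omegaIcc f (1/n) * S4 := hmain
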